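/- Let b₁, b₂, u₁, u₂ ∈ ℝ³ with ‖b₁‖ = ‖b₂‖ = 1, b₁ ≠ b₂, b₁ ≠ −b₂, ⟨b₁, u₁⟩ = 0, ⟨b₂, u₂⟩ = 0, and ⟨b₂, u₁⟩ + ⟨b₁, u₂⟩ = 0. Then there exists ω ∈ ℝ³ such that b₁ ×₃ ω = −u₁ and b₂ ×₃ ω = −u₂. -/

import Mathlib

open scoped RealInnerProductSpace

noncomputable section

abbrev E3 := EuclideanSpace ℝ (Fin 3)

/-- The cross product on `ℝ³`. -/
def cross3 (x y : E3) : E3 :=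
  (EuclideanSpace.equiv (Fin 3) ℝ).symm
    ![x 1 * y 2 - x 2 * y 1, x 2 * y 0 - x 0 * y 2, x 0 * y 1 - x 1 * y 0]

lemma inner3 (x y : E3) : ⟪x,y⟫ = x 0*y 0 + x 1*y 1 + x 2*y 2 := by
  simp [PiLp.inner_apply, Fin.sum_univ_three]; ring

lemma cross3_0 (x y : E3) : cross3 x y 0 = x 1 * y 2 - x 2 * y 1 := rfl
lemma cross3_1 (x y : E3) : cross3 x y 1 = x 2 * y 0 - x 0 * y 2 := rfl
lemma cross3_2 (x y : E3) : cross3 x y 2 = x 0 * y 1 - x 1 * y 0 := rfl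

lemma ext3 {x y : E3} (h0 : x 0 = y 0) (h1 : x 1 = y 1) (h2 : x 2 = y 2) : x = y := by
  ext i
  fin_cases i <;> assumption

/-- Binet–Cauchy identity. -/
lemma binet (a b c d : E3) :
    ⟪cross3 a b, cross3 c d⟫ = ⟪a,c⟫ * ⟪b,d⟫ - ⟪a,d⟫ * ⟪b,c⟫ := by
  simp only [inner3, cross3_0, cross3_1, cross3_2]
  ring

/-- BAC-CAB identity. -/
lemma bac_cab (a b c : E3) :
    cross3 a (cross3 b c) = ⟪a,c⟫ • b - ⟪a,b⟫ • c := by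
  apply ext3 <;>
    simp only [inner3, cross3_0, cross3_1, cross3_2, PiLp.sub_apply, PiLp.smul_apply,
      smul_eq_mul] <;> ring

lemma cross3_triple_left (a b : E3) : ⟪cross3 a b, a⟫ = 0 := by
  simp only [inner3, cross3_0, cross3_1, cross3_2]; ring

lemma cross3_triple_right (a b : E3) : ⟪cross3 a b, b⟫ = 0 := by
  simp only [inner3, cross3_0, cross3_1, cross3_2]; ring

lemma cross3_self (a : E3) : cross3 a a = 0 := by
  apply ext3 <;>
    simp only [cross3_0, cross3_1, cross3_2, PiLp.zero_apply] <;> ring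

lemma cross3_smul_right (a : E3) (r : ℝ) (x : E3) :
    cross3 a (r • x) = r • cross3 a x := by
  apply ext3 <;>
    simp only [cross3_0, cross3_1, cross3_2, PiLp.smul_apply, smul_eq_mul] <;> ring

lemma cross3_sub_right (a x y : E3) :
    cross3 a (x - y) = cross3 a x - cross3 a y := by
  apply ext3 <;>
    simp only [cross3_0, cross3_1, cross3_2, PiLp.sub_apply] <;> ring

lemma cross3_add_right (a x y : E3) :
    cross3 a (x + y) = cross3 a x + cross3 a y := by
  apply ext3 <;>
    simp only [cross3_0, cross3_1, cross3_2, PiLp.add_apply] <;> ring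

/-- Existence of a common angular velocity `ω` annihilating the derivatives of two
body-frame bearings `b₁, b₂` with projected velocity contributions `u₁ ⊥ b₁`,
`u₂ ⊥ b₂` satisfying the angle-preservation condition `⟨b₂,u₁⟩ + ⟨b₁,u₂⟩ = 0`. -/
theorem exists_common_angular_velocity
    (b₁ b₂ u₁ u₂ : E3)
    (hb₁ : ‖b₁‖ = 1) (hb₂ : ‖b₂‖ = 1)
    (hne : b₁ ≠ b₂) (hne' : b₁ ≠ -b₂)
    (hu₁ : ⟪b₁, u₁⟫ = 0) (hu₂ : ⟪b₂, u₂⟫ = 0)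
    (hang : ⟪b₂, u₁⟫ + ⟪b₁, u₂⟫ = 0) :
    ∃ ω : E3, cross3 b₁ ω = -u₁ ∧ cross3 b₂ ω = -u₂ := by
  have hbb₁ : ⟪b₁, b₁⟫ = 1 := by
    rw [real_inner_self_eq_norm_sq, hb₁]; norm_num
  have hbb₂ : ⟪b₂, b₂⟫ = 1 := by
    rw [real_inner_self_eq_norm_sq, hb₂]; norm_num
  set c : ℝ := ⟪b₁, b₂⟫ with hc
  have hc1 : c ≠ 1 := by
    intro h
    exact hne ((inner_eq_one_iff_of_norm_eq_one hb₁ hb₂).mp h)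
  have hc2 : c ≠ -1 := by
    intro h
    apply hne'
    have hnb₂ : ‖-b₂‖ = 1 := by rwa [norm_neg]
    refine (inner_eq_one_iff_of_norm_eq_one (𝕜 := ℝ) hb₁ hnb₂).mp ?_
    rw [inner_neg_right, ← hc, h]; norm_num
  have hc' : ⟪b₂, b₁⟫ = c := by rw [real_inner_comm]
  have hd : 1 - c ^ 2 ≠ 0 := by
    intro h
    have : (1 - c) * (1 + c) = 0 := by ring_nf; linarith
    rcases mul_eq_zero.mp this with h' | h'
    · exact hc1 (by linarith)
    · exact hc2 (by linarith)
  set d : ℝ := 1 - c ^ 2 with hdd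
  set v : E3 := cross3 b₁ u₁ - cross3 b₂ u₂ with hv
  set p₁ : ℝ := ⟪b₁, v⟫ with hp₁
  set p₂ : ℝ := ⟪b₂, v⟫ with hp₂
  set α : ℝ := (p₁ - c * p₂) / d with hα
  set β : ℝ := (p₂ - c * p₁) / d with hβ
  set w : E3 := v - α • b₁ - β • b₂ with hw
  set n : E3 := cross3 b₁ b₂ with hn
  -- inner products of w with b₁, b₂
  have hw₁ : ⟪b₁, w⟫ = 0 := by
    rw [hw, inner_sub_right, inner_sub_right, inner_smul_right, inner_smul_right,
      ← hp₁, hbb₁, ← hc]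
    rw [hα, hβ]
    field_simp
    ring
  have hw₂ : ⟪b₂, w⟫ = 0 := by
    rw [hw, inner_sub_right, inner_sub_right, inner_smul_right, inner_smul_right,
      ← hp₂, hbb₂, hc']
    rw [hα, hβ]
    field_simp
    ring
  -- w is orthogonal to n as well
  have hnb₁ : ⟪n, b₁⟫ = 0 := cross3_triple_left b₁ b₂
  have hnb₂ : ⟪n, b₂⟫ = 0 := cross3_triple_right b₁ b₂
  have hnv : ⟪n, v⟫ = 0 := by
    rw [hv, inner_sub_right, hn, binet, binet, hbb₁, hbb₂, hc']
    have h5 : ⟪b₂, u₁⟫ = -⟪b₁, u₂⟫ := by linarith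
    rw [hu₁, hu₂, h5]
    ring
  have hnw : ⟪n, w⟫ = 0 := by
    rw [hw, inner_sub_right, inner_sub_right, inner_smul_right, inner_smul_right,
      hnb₁, hnb₂, hnv]
    ring
  -- w × n = 0 by BAC-CAB
  have hwn : cross3 w n = 0 := by
    have hw₁' : ⟪w, b₁⟫ = 0 := by rw [real_inner_comm]; exact hw₁
    have hw₂' : ⟪w, b₂⟫ = 0 := by rw [real_inner_comm]; exact hw₂
    rw [hn, bac_cab, hw₁', hw₂']
    simp
  -- Lagrange: ‖w‖²‖n‖² = ⟪w,n⟫² + ‖w×n‖² = 0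
  have hlag : ⟪w, w⟫ * ⟪n, n⟫ = 0 := by
    have := binet w n w n
    rw [hwn] at this
    simp only [inner_zero_left] at this
    have hwn' : ⟪w, n⟫ = 0 := by rw [real_inner_comm]; exact hnw
    rw [hwn'] at this
    linarith
  have hnn : ⟪n, n⟫ = d := by
    rw [hn, binet, hbb₁, hbb₂, hc', hdd]
    ring
  have hw0 : w = 0 := by
    have hww : ⟪w, w⟫ = 0 := by
      rcases mul_eq_zero.mp hlag with h | h
      · exact h
      · exact absurd (hnn ▸ h) hd
    exact inner_self_eq_zero.mp hww
  -- hence v = α b₁ + β b₂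
  have hvdec : v = α • b₁ + β • b₂ := by
    have := hw0
    rw [hw, sub_sub, sub_eq_zero] at this
    exact this
  -- define ω
  refine ⟨cross3 b₁ u₁ - α • b₁, ?_, ?_⟩
  · rw [cross3_sub_right, cross3_smul_right, cross3_self, bac_cab, hu₁, hbb₁]
    simp
  · have hω : cross3 b₁ u₁ - α • b₁ = cross3 b₂ u₂ + β • b₂ := by
      have : cross3 b₁ u₁ - cross3 b₂ u₂ = α • b₁ + β • b₂ := by rw [← hv]; exact hvdec
      have h2 : cross3 b₁ u₁ = cross3 b₂ u₂ + (α • b₁ + β • b₂) := by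
        rw [← this]; abel
      rw [h2]; abel
    rw [hω, cross3_add_right, cross3_smul_right, cross3_self, bac_cab, hu₂, hbb₂]
    simp
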